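/- arXiv:1910.06830 — 2 statements merged into one kernel-verified Lean document; each statement's English description precedes it below -/
import Mathlib

section
/- Suppose n is relatively prime to q (equivalently, the characteristic p of F_q does not divide n). Let C be a cyclic code of length n over R = F_q + uF_q with canonical monic divisors g(x) and a(x) of x^n − 1 generating π(C) and Tor(C). Then C = ⟨g(x), u·a(x)⟩, and moreover this ideal coincides with the principal ideal ⟨g(x) + u·a(x)⟩ of R_n. -/
open Polynomial

noncomputable section

/-- The ambient ring `S[x]/(x^n - 1)`. -/
abbrev Amb (S : Type) [CommRing S] (n : ℕ) : Type := AdjoinRoot (X ^ n - 1 : S[X])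

/-- The image of a polynomial `f ∈ S[x]` in `S[x]/(x^n - 1)`. -/
def toAmb (S : Type) [CommRing S] (n : ℕ) (f : S[X]) : Amb S n := AdjoinRoot.mk _ f

lemma root_pow_sub_one (S : Type) [CommRing S] (n : ℕ) :
    (AdjoinRoot.root (X ^ n - 1 : S[X])) ^ n - 1 = 0 := by
  have h : (AdjoinRoot.mk (X ^ n - 1 : S[X])) (X ^ n - 1 : S[X]) = 0 := AdjoinRoot.mk_self
  simpa [map_sub, map_pow, AdjoinRoot.mk_X] using h

/-- The ring hom `S[x]/(x^n-1) → T[x]/(x^n-1)` induced by `φ : S →+* T`. -/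
def liftAmb {S T : Type} [CommRing S] [CommRing T] (n : ℕ) (φ : S →+* T) :
    Amb S n →+* Amb T n :=
  AdjoinRoot.lift ((AdjoinRoot.of _).comp φ) (AdjoinRoot.root _) (by
    have h := root_pow_sub_one T n
    simp [eval₂_sub, eval₂_pow, eval₂_one, eval₂_X, h])

/-- Reduction mod `u`: the homomorphism `π : R_n → F_q[x]/(x^n-1)` induced by
the projection `F_q + uF_q → F_q`. -/
def redMod (F : Type) [Field F] (n : ℕ) : Amb (DualNumber F) n →+* Amb F n :=
  liftAmb n (TrivSqZeroExt.fstHom F F F).toRingHom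

/-- The inclusion `F_q[x]/(x^n-1) → R_n` induced by `F_q ⊆ F_q + uF_q`. -/
def emb (F : Type) [Field F] (n : ℕ) : Amb F n →+* Amb (DualNumber F) n :=
  liftAmb n (algebraMap F (DualNumber F))

/-- The element `u` of `R_n = (F_q + uF_q)[x]/(x^n-1)`. -/
def uE (F : Type) [Field F] (n : ℕ) : Amb (DualNumber F) n :=
  AdjoinRoot.of _ (DualNumber.eps : DualNumber F)

/-- The torsion code `Tor(C) = {r ∈ F_q[x]/(x^n-1) : u·r ∈ C}` of a cyclic code
`C ⊆ R_n`. -/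
def Tor (F : Type) [Field F] (n : ℕ) (C : Ideal (Amb (DualNumber F) n)) : Set (Amb F n) :=
  {r | uE F n * emb F n r ∈ C}

/-- A set of codewords (identified with residue classes in `S[x]/(x^n-1)`) is
reversible if, for each codeword with coefficient vector `(c_0, …, c_{n-1})`
(i.e. each representative of degree `< n`), the reversed word `(c_{n-1}, …, c_0)`
is again a codeword.  Here `Polynomial.reflect (n-1)` realizes the reversal of
the coefficient vector of a polynomial of degree `< n`. -/
def ReversibleCode (S : Type) [CommRing S] (n : ℕ) (D : Set (Amb S n)) : Prop :=
  ∀ f : S[X], f.degree < (n : ℕ) → toAmb S n f ∈ D →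
    toAmb S n (f.reflect (n - 1)) ∈ D

/-- The Euclidean dual code of a code `C ⊆ S[x]/(x^n-1)`: all residue classes whose
coefficient vector (of the degree `< n` representative) is orthogonal to the
coefficient vector of every codeword of `C`. -/
def dualCode (S : Type) [CommRing S] (n : ℕ) (C : Set (Amb S n)) : Set (Amb S n) :=
  {w | ∀ wp : S[X], wp.degree < (n : ℕ) → toAmb S n wp = w →
    ∀ cp : S[X], cp.degree < (n : ℕ) → toAmb S n cp ∈ C →
      ∑ i ∈ Finset.range n, wp.coeff i * cp.coeff i = 0}

/-- The minimum Hamming distance of a code `C ⊆ S[x]/(x^n-1)`: the least Hamming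
weight of (the coefficient vector of) a nonzero codeword. -/
def dH (S : Type) [CommRing S] (n : ℕ) (C : Set (Amb S n)) : ℕ :=
  sInf {d | ∃ cp : S[X], cp.degree < (n : ℕ) ∧ cp ≠ 0 ∧ toAmb S n cp ∈ C ∧
    cp.support.card = d}

-- helper lemmas
lemma liftAmb_mk {S T : Type} [CommRing S] [CommRing T] (n : ℕ) (φ : S →+* T) (f : S[X]) :
    liftAmb n φ (AdjoinRoot.mk _ f) = AdjoinRoot.mk _ (f.map φ) := by
  unfold liftAmb
  rw [AdjoinRoot.lift_mk, ← AdjoinRoot.aeval_eq, aeval_def, ← AdjoinRoot.algebraMap_eq,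
    eval₂_map]

lemma redMod_mk (F : Type) [Field F] (n : ℕ) (f : (DualNumber F)[X]) :
    redMod F n (AdjoinRoot.mk _ f) =
      AdjoinRoot.mk _ (f.map (TrivSqZeroExt.fstHom F F F).toRingHom) :=
  liftAmb_mk n _ f

lemma emb_mk (F : Type) [Field F] (n : ℕ) (f : F[X]) :
    emb F n (AdjoinRoot.mk _ f) = AdjoinRoot.mk _ (f.map (algebraMap F (DualNumber F))) :=
  liftAmb_mk n _ f

lemma redMod_emb (F : Type) [Field F] (n : ℕ) (z : Amb F n) :
    redMod F n (emb F n z) = z := by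
  obtain ⟨f, rfl⟩ := AdjoinRoot.mk_surjective z
  rw [emb_mk, redMod_mk, Polynomial.map_map]
  have h2 : ((TrivSqZeroExt.fstHom F F F).toRingHom).comp (algebraMap F (DualNumber F))
      = RingHom.id F := RingHom.ext fun x => rfl
  rw [h2, Polynomial.map_id]

lemma uE_mul_uE (F : Type) [Field F] (n : ℕ) : uE F n * uE F n = 0 := by
  unfold uE
  rw [← map_mul, DualNumber.eps_mul_eps, map_zero]

lemma eps_mul_inl (F : Type) [Field F] (x : F) :
    (DualNumber.eps : DualNumber F) * TrivSqZeroExt.inl x = TrivSqZeroExt.inr x := by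
  rw [mul_comm]
  show TrivSqZeroExt.inl x * TrivSqZeroExt.inr (1 : F) = _
  rw [TrivSqZeroExt.inl_mul_inr, smul_eq_mul, mul_one]

lemma exists_decomp (F : Type) [Field F] (n : ℕ) (z : Amb (DualNumber F) n) :
    ∃ y : Amb F n, z = emb F n (redMod F n z) + uE F n * emb F n y := by
  classical
  obtain ⟨f, rfl⟩ := AdjoinRoot.mk_surjective z
  set f₁ : F[X] := ∑ i ∈ f.support, Polynomial.C ((f.coeff i).snd) * X ^ i with hf₁
  refine ⟨AdjoinRoot.mk _ f₁, ?_⟩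
  have hcoeff : ∀ i, f₁.coeff i = (f.coeff i).snd := by
    intro i
    rw [hf₁, finset_sum_coeff]
    simp only [coeff_C_mul, coeff_X_pow, mul_ite, mul_one, mul_zero]
    rw [Finset.sum_ite_eq f.support i (fun j => (f.coeff j).snd)]
    split_ifs with h
    · rfl
    · rw [Polynomial.notMem_support_iff.mp h]; rfl
  have comp : ∀ c : DualNumber F,
      (TrivSqZeroExt.inl (TrivSqZeroExt.fst c) : DualNumber F)
        + DualNumber.eps * TrivSqZeroExt.inl (TrivSqZeroExt.snd c) = c := by
    intro c
    rw [eps_mul_inl, TrivSqZeroExt.inl_fst_add_inr_snd_eq]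
  have key : f = (f.map (TrivSqZeroExt.fstHom F F F).toRingHom).map (algebraMap F (DualNumber F))
      + Polynomial.C (DualNumber.eps : DualNumber F) * f₁.map (algebraMap F (DualNumber F)) := by
    apply Polynomial.ext
    intro i
    rw [coeff_add, coeff_map, coeff_map, coeff_C_mul, coeff_map, hcoeff]
    show f.coeff i = TrivSqZeroExt.inl (TrivSqZeroExt.fst (f.coeff i))
      + DualNumber.eps * TrivSqZeroExt.inl (TrivSqZeroExt.snd (f.coeff i))
    exact (comp _).symm
  have huE : uE F n * AdjoinRoot.mk _ (f₁.map (algebraMap F (DualNumber F)))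
      = AdjoinRoot.mk _ (Polynomial.C (DualNumber.eps : DualNumber F)
          * f₁.map (algebraMap F (DualNumber F))) := by
    rw [map_mul, AdjoinRoot.mk_C]; rfl
  rw [redMod_mk, emb_mk, emb_mk, huE, ← map_add]
  exact congrArg _ key

end

/-- if `gcd(n, q) = 1` then `C = ⟨g(x), u·a(x)⟩ = ⟨g(x) + u·a(x)⟩`. -/
theorem stmt4 {F : Type} [Field F] [Fintype F] {n : ℕ} (hn : 0 < n)
    (hco : Nat.Coprime n (Fintype.card F))
    (C : Ideal (Amb (DualNumber F) n)) (g a : F[X])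
    (hgm : g.Monic) (ham : a.Monic)
    (hgdvd : g ∣ X ^ n - 1) (hadvd : a ∣ X ^ n - 1)
    (hgC : Ideal.map (redMod F n) C = Ideal.span {toAmb F n g})
    (haC : Tor F n C = ↑(Ideal.span {toAmb F n a})) :
    C = Ideal.span {emb F n (toAmb F n g), uE F n * emb F n (toAmb F n a)} ∧
    C = Ideal.span {emb F n (toAmb F n g) + uE F n * emb F n (toAmb F n a)} := by

  classical
  simp only [toAmb] at hgC haC ⊢
  set mkF : F[X] →+* Amb F n := AdjoinRoot.mk (X ^ n - 1 : F[X]) with hmkF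
  -- separability
  have hcard0 : ((Fintype.card F : ℕ) : F) = 0 := FiniteField.cast_card_eq_zero F
  have hnF : (n : F) ≠ 0 := by
    intro h0
    have hbz := Nat.gcd_eq_gcd_ab n (Fintype.card F)
    have hz : ((Nat.gcd n (Fintype.card F) : ℤ) : F) = 0 := by
      rw [hbz]; push_cast; rw [h0, hcard0]; ring
    rw [Nat.Coprime] at hco
    rw [hco] at hz
    norm_num at hz
  have hsep : (X ^ n - 1 : F[X]).Separable := by
    have := Polynomial.separable_X_pow_sub_C (1 : F) hnF one_ne_zero
    simpa using this
  obtain ⟨b, hb⟩ := hgdvd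
  have hcop : IsCoprime g b := by
    apply Polynomial.Separable.isCoprime; rw [← hb]; exact hsep
  obtain ⟨s, t, hst⟩ := hcop
  have hgb0 : mkF (g * b) = 0 := by rw [← hb]; exact AdjoinRoot.mk_self
  -- Tor translations
  have hTor1 : ∀ y : Amb F n, y ∈ Ideal.span {mkF a} → uE F n * emb F n y ∈ C := by
    intro y hy
    have h := (Set.ext_iff.mp haC y).mpr (by exact hy)
    exact h
  have hTor2 : ∀ y : Amb F n, uE F n * emb F n y ∈ C → y ∈ Ideal.span {mkF a} := by
    intro y hy
    have h := (Set.ext_iff.mp haC y).mp (by exact hy)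
    exact h
  have hsurj : Function.Surjective (redMod F n) := fun z => ⟨emb F n z, redMod_emb F n z⟩
  have hgmem : mkF g ∈ Ideal.map (redMod F n) C := by
    rw [hgC]; exact Ideal.mem_span_singleton_self _
  obtain ⟨c, hcC, hcρ⟩ := (Ideal.mem_map_iff_of_surjective _ hsurj).mp hgmem
  obtain ⟨r, hr⟩ := exists_decomp F n c
  rw [hcρ] at hr
  -- ḡ ∈ span ā
  have hga : mkF g ∈ Ideal.span {mkF a} := by
    apply hTor2
    have h1 : uE F n * c ∈ C := C.mul_mem_left _ hcC
    have h2 : uE F n * c = uE F n * emb F n (mkF g) := by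
      rw [hr, mul_add, ← mul_assoc, uE_mul_uE, zero_mul, add_zero]
    rwa [h2] at h1
  -- key quotient identities
  have hgsg : mkF g * mkF (s * g) = mkF g := by
    rw [← map_mul]
    have hpoly : g * (s * g) = g + (g * b) * (-t) := by linear_combination g * hst
    rw [hpoly, map_add, map_mul, hgb0, zero_mul, add_zero]
  -- G ∈ C
  have hGC : emb F n (mkF g) ∈ C := by
    have hc'C : c * emb F n (mkF (s * g)) ∈ C := C.mul_mem_right _ hcC
    have hc' : c * emb F n (mkF (s * g))
        = emb F n (mkF g) + uE F n * emb F n (r * mkF (s * g)) := by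
      rw [hr]
      rw [show (emb F n (mkF g) + uE F n * emb F n r) * emb F n (mkF (s * g))
          = emb F n (mkF g * mkF (s * g)) + uE F n * emb F n (r * mkF (s * g)) by
        rw [map_mul (emb F n), map_mul (emb F n)]; ring]
      rw [hgsg]
    have hu : uE F n * emb F n (r * mkF (s * g)) ∈ C := by
      apply hTor1
      have : r * mkF (s * g) = (r * mkF s) * mkF g := by rw [map_mul]; ring
      rw [this]
      exact Ideal.mul_mem_left _ _ hga
    have := Ideal.sub_mem C hc'C hu
    rwa [hc', add_sub_cancel_right] at this
  -- first equality
  have hfirst : C = Ideal.span {emb F n (mkF g), uE F n * emb F n (mkF a)} := by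
    apply le_antisymm
    · intro z hz
      have hz' : redMod F n z ∈ Ideal.span {mkF g} := by
        rw [← hgC]; exact Ideal.mem_map_of_mem _ hz
      obtain ⟨w, hw⟩ := Ideal.mem_span_singleton'.mp hz'
      obtain ⟨y, hy⟩ := exists_decomp F n z
      have hyC : uE F n * emb F n y ∈ C := by
        have heq : uE F n * emb F n y = z - emb F n (redMod F n z) := by
          rw [eq_sub_iff_add_eq, add_comm]; exact hy.symm
        rw [heq]
        refine Ideal.sub_mem C hz ?_
        rw [← hw, map_mul]
        exact C.mul_mem_left _ hGC
      obtain ⟨v, hv⟩ := Ideal.mem_span_singleton'.mp (hTor2 y hyC)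
      rw [hy, ← hw, ← hv]
      have h1 : emb F n (w * mkF g) ∈ Ideal.span {emb F n (mkF g), uE F n * emb F n (mkF a)} := by
        rw [map_mul]
        exact Ideal.mul_mem_left _ _ (Ideal.subset_span (by simp))
      have h2 : uE F n * emb F n (v * mkF a)
          ∈ Ideal.span {emb F n (mkF g), uE F n * emb F n (mkF a)} := by
        rw [map_mul, show uE F n * (emb F n v * emb F n (mkF a))
          = emb F n v * (uE F n * emb F n (mkF a)) by ring]
        exact Ideal.mul_mem_left _ _ (Ideal.subset_span (by simp))
      exact Ideal.add_mem _ h1 h2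
    · rw [Ideal.span_le]
      rintro x hx
      rcases hx with h | h
      · rw [h] at *; exact hGC
      · simp only [Set.mem_singleton_iff] at h
        rw [h]
        exact hTor1 (mkF a) (Ideal.mem_span_singleton_self _)
  refine ⟨hfirst, ?_⟩
  rw [hfirst]
  -- span {G, uA} = span {G + uA}
  apply le_antisymm
  · rw [Ideal.span_le]
    rintro x hx
    have hd : emb F n (mkF g) + uE F n * emb F n (mkF a)
        ∈ Ideal.span {emb F n (mkF g) + uE F n * emb F n (mkF a)} :=
      Ideal.mem_span_singleton_self _
    have huA : uE F n * emb F n (mkF a)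
        ∈ Ideal.span {emb F n (mkF g) + uE F n * emb F n (mkF a)} := by
      have hgtb : mkF (g * (t * b)) = 0 := by
        rw [show g * (t * b) = (g * b) * t by ring, map_mul, hgb0, zero_mul]
      have hsum : mkF (g * (s * a)) + mkF (a * (t * b)) = mkF a := by
        rw [← map_add]
        congr 1
        linear_combination a * hst
      have hmul : (emb F n (mkF g) + uE F n * emb F n (mkF a))
          * (emb F n (mkF (t * b)) + uE F n * emb F n (mkF (s * a)))
          = uE F n * emb F n (mkF a) := by
        have expand : (emb F n (mkF g) + uE F n * emb F n (mkF a))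
            * (emb F n (mkF (t * b)) + uE F n * emb F n (mkF (s * a)))
            = emb F n (mkF (g * (t * b)))
              + uE F n * emb F n (mkF (g * (s * a)) + mkF (a * (t * b)))
              + (uE F n * uE F n) * (emb F n (mkF a) * emb F n (mkF (s * a))) := by
          simp only [map_mul, map_add]
          ring
        rw [expand, hgtb, hsum, uE_mul_uE, map_zero, zero_mul, add_zero, zero_add]
      have hmm := Ideal.mul_mem_right
        (emb F n (mkF (t * b)) + uE F n * emb F n (mkF (s * a))) _ hd
      rwa [hmul] at hmm
    have hG : emb F n (mkF g)
        ∈ Ideal.span {emb F n (mkF g) + uE F n * emb F n (mkF a)} := by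
      have := Ideal.sub_mem _ hd huA
      rwa [add_sub_cancel_right] at this
    rcases hx with h | h
    · rw [h] at *; exact hG
    · simp only [Set.mem_singleton_iff] at h
      rw [h]; exact huA
  · rw [Ideal.span_le]
    rintro x hx
    simp only [Set.mem_singleton_iff] at hx
    rw [hx]
    exact Ideal.add_mem _ (Ideal.subset_span (by simp)) (Ideal.subset_span (by simp))
end

section
/- If n is relatively prime to q (equivalently, the characteristic p of F_q does not divide n), then R_n = R[x]/⟨x^n − 1⟩ is a principal ideal ring: every ideal of R_n is principal. -/
open Polynomial

noncomputable section StmtFiveAux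
open Polynomial

lemma stmt5_liftAmb_mk {S T : Type} [CommRing S] [CommRing T] (n : ℕ) (φ : S →+* T) (p : S[X]) :
    liftAmb n φ (AdjoinRoot.mk _ p) = AdjoinRoot.mk _ (p.map φ) := by
  rw [liftAmb, AdjoinRoot.lift_mk, ← AdjoinRoot.aeval_eq, aeval_def, eval₂_map]
  rfl

variable {F : Type} [Field F] {n : ℕ}

lemma stmt5_redMod_emb (a : Amb F n) : redMod F n (emb F n a) = a := by
  obtain ⟨p, rfl⟩ := AdjoinRoot.mk_surjective a
  rw [emb, stmt5_liftAmb_mk, redMod, stmt5_liftAmb_mk, Polynomial.map_map]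
  congr 1
  have : (TrivSqZeroExt.fstHom F F F).toRingHom.comp (algebraMap F (DualNumber F))
      = RingHom.id F := by ext x; rfl
  rw [this, Polynomial.map_id]

lemma stmt5_uE_sq : uE F n * uE F n = 0 := by
  rw [uE, ← map_mul, DualNumber.eps_mul_eps, map_zero]

lemma stmt5_redMod_uE : redMod F n (uE F n) = 0 := by
  have : uE F n = AdjoinRoot.mk _ (C (DualNumber.eps : DualNumber F)) := rfl
  rw [this, redMod, stmt5_liftAmb_mk, Polynomial.map_C]
  simp [TrivSqZeroExt.fstHom]
  exact map_zero _

lemma stmt5_emb_mk (p : F[X]) :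
    emb F n (AdjoinRoot.mk _ p) = AdjoinRoot.mk _ (p.map (algebraMap F (DualNumber F))) :=
  stmt5_liftAmb_mk n _ p

lemma stmt5_decomp (c : Amb (DualNumber F) n) :
    ∃ a b : Amb F n, c = emb F n a + uE F n * emb F n b := by
  obtain ⟨p, rfl⟩ := AdjoinRoot.mk_surjective c
  induction p using Polynomial.induction_on with
  | C r =>
    refine ⟨AdjoinRoot.mk _ (C r.fst), AdjoinRoot.mk _ (C r.snd), ?_⟩
    have hr : r = (algebraMap F (DualNumber F)) r.fst
        + DualNumber.eps * (algebraMap F (DualNumber F)) r.snd := by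
      rw [TrivSqZeroExt.algebraMap_eq_inl', TrivSqZeroExt.algebraMap_eq_inl']
      ext <;> simp only [TrivSqZeroExt.fst_add, TrivSqZeroExt.snd_add, TrivSqZeroExt.fst_mul,
        TrivSqZeroExt.snd_mul, TrivSqZeroExt.fst_inl, TrivSqZeroExt.snd_inl, DualNumber.fst_eps,
        DualNumber.snd_eps, Algebra.algebraMap_self_apply, smul_eq_mul, smul_zero, mul_one, zero_mul,
        mul_zero, add_zero, zero_add, MulOpposite.smul_eq_mul_unop, MulOpposite.unop_op, one_mul]
    rw [stmt5_emb_mk, stmt5_emb_mk, Polynomial.map_C, Polynomial.map_C, uE]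
    show _ = _ + AdjoinRoot.mk _ (C (DualNumber.eps : DualNumber F)) * _
    rw [← map_mul, ← map_add, ← C_mul, ← C_add]
    exact congrArg _ (congrArg C hr)
  | add p q hp hq =>
    obtain ⟨a1, b1, h1⟩ := hp; obtain ⟨a2, b2, h2⟩ := hq
    exact ⟨a1 + a2, b1 + b2, by rw [map_add, map_add, map_add, h1, h2]; ring⟩
  | monomial m r ih =>
    obtain ⟨a, b, h⟩ := ih
    refine ⟨a * AdjoinRoot.mk _ X, b * AdjoinRoot.mk _ X, ?_⟩
    have : (AdjoinRoot.mk (X ^ n - 1 : (DualNumber F)[X])) (C r * X ^ (m+1))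
        = (AdjoinRoot.mk _) (C r * X ^ m) * AdjoinRoot.mk _ X := by
      rw [← map_mul]; ring_nf
    rw [this, h, map_mul, map_mul, stmt5_emb_mk, Polynomial.map_X]
    ring

lemma stmt5_redMod_decomp (a b : Amb F n) :
    redMod F n (emb F n a + uE F n * emb F n b) = a := by
  rw [map_add, map_mul, stmt5_redMod_emb, stmt5_redMod_emb, stmt5_redMod_uE, zero_mul, add_zero]

lemma stmt5_exists_idem {A : Type} [CommRing A] [IsSemisimpleRing A] (J : Ideal A) :
    ∃ e : A, e * e = e ∧ J = Ideal.span {e} := by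
  obtain ⟨J', hJ'⟩ := exists_isCompl J
  have h1 : (1 : A) ∈ J ⊔ J' := hJ'.sup_eq_top ▸ Submodule.mem_top
  obtain ⟨e, he, f, hf, hef⟩ := Submodule.mem_sup.mp h1
  have key : ∀ x ∈ J, x * f = 0 := by
    intro x hx
    have h2 : x * f ∈ J ⊓ J' :=
      ⟨Ideal.mul_mem_right f J hx, by
        rw [← smul_eq_mul]; exact Submodule.smul_mem J' x hf⟩
    rw [hJ'.inf_eq_bot] at h2
    exact h2
  have hee : e * e = e := by
    have h3 : e * (e + f) = e * 1 := by rw [hef]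
    rwa [mul_add, key e he, add_zero, mul_one] at h3
  refine ⟨e, hee, le_antisymm ?_ (Ideal.span_le.mpr (by simpa using he))⟩
  intro x hx
  have h4 : x * (e + f) = x := by rw [hef, mul_one]
  rw [mul_add, key x hx, add_zero] at h4
  rw [← h4]
  exact Ideal.mem_span_singleton'.mpr ⟨x, rfl⟩

end StmtFiveAux


/-- if `gcd(n, q) = 1` then `R_n = R[x]/(x^n - 1)` is a principal
ideal ring. -/
theorem stmt5 {F : Type} [Field F] [Fintype F] {n : ℕ} (hn : 0 < n)
    (hco : Nat.Coprime n (Fintype.card F)) :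
    IsPrincipalIdealRing (Amb (DualNumber F) n) := by
  classical
  -- the characteristic does not divide `n`
  have hchar : (n : F) ≠ 0 := by
    intro h
    have hdvd : ringChar F ∣ n := (CharP.cast_eq_zero_iff F (ringChar F) n).mp h
    obtain ⟨k, hk⟩ := FiniteField.card F (ringChar F)
    have hdvd2 : ringChar F ∣ Fintype.card F := by
      rw [hk.2]; exact dvd_pow_self _ (by exact_mod_cast k.ne_zero)
    have h1 : ringChar F ∣ 1 := hco ▸ Nat.dvd_gcd hdvd hdvd2
    exact hk.1.ne_one (Nat.eq_one_of_dvd_one h1)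
  -- `F[x]/(x^n-1)` is semisimple
  have hne : (X ^ n - 1 : F[X]) ≠ 0 := by
    simpa using X_pow_sub_C_ne_zero hn (1 : F)
  haveI : Module.Finite F (Amb F n) := (AdjoinRoot.powerBasis hne).finite
  haveI : IsArtinianRing (Amb F n) := IsArtinianRing.of_finite F (Amb F n)
  haveI : IsReduced (Amb F n) := by
    have hsq : Squarefree (X ^ n - 1 : F[X]) :=
      (X_pow_sub_one_separable_iff.mpr hchar).squarefree
    have hrad : (Ideal.span {(X ^ n - 1 : F[X])}).IsRadical :=
      isRadical_iff_span_singleton.mp hsq.isRadical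
    exact (Ideal.isRadical_iff_quotient_reduced _).mp hrad
  haveI hss : IsSemisimpleRing (Amb F n) := IsArtinianRing.isSemisimpleRing_of_isReduced (Amb F n)
  constructor
  intro I
  -- the torsion ideal
  let I0 : Ideal (Amb F n) :=
    { carrier := Tor F n I
      add_mem' := fun {a b} ha hb => by
        show (uE F n) * (emb F n) (a + b) ∈ I
        rw [map_add, mul_add]
        exact I.add_mem ha hb
      zero_mem' := by show (uE F n) * (emb F n) 0 ∈ I; rw [map_zero, mul_zero]; exact I.zero_mem
      smul_mem' := fun c x hx => by
        show (uE F n) * (emb F n) (c * x) ∈ I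
        rw [map_mul]
        have : (uE F n) * (emb F n c * (emb F n) x) = (emb F n) c * (uE F n * (emb F n) x) := by ring
        rw [this]
        exact I.mul_mem_left (emb F n c) hx }
  let I1 : Ideal (Amb F n) := I.map (redMod F n)
  have hmemI0 : ∀ x : Amb F n, x ∈ I0 ↔ (uE F n) * (emb F n) x ∈ I := fun x => Iff.rfl
  have hsub : I1 ≤ I0 := by
    rw [Ideal.map_le_iff_le_comap]
    intro c hc
    obtain ⟨a, b, hc'⟩ := stmt5_decomp c
    have hπc : (redMod F n) c = a := by rw [hc']; exact stmt5_redMod_decomp a b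
    show (redMod F n) c ∈ I0
    rw [hmemI0, hπc]
    have huc : (uE F n) * (emb F n) a = (uE F n) * c := by
      rw [hc', mul_add, ← mul_assoc, stmt5_uE_sq, zero_mul, add_zero]
    rw [huc]
    exact I.mul_mem_left (uE F n) hc
  obtain ⟨e0, he0, hI0⟩ := stmt5_exists_idem I0
  obtain ⟨e1, he1, hI1⟩ := stmt5_exists_idem I1
  have he1I0 : e1 ∈ I0 := hsub (hI1 ▸ Ideal.mem_span_singleton_self e1)
  have he10 : e1 * e0 = e1 := by
    rw [hI0] at he1I0
    obtain ⟨x, hx⟩ := Ideal.mem_span_singleton'.mp he1I0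
    rw [← hx, mul_assoc, he0]
  -- pick a preimage of `e1` in `I`
  have hπsurj : Function.Surjective (redMod F n) := fun a => ⟨(emb F n) a, stmt5_redMod_emb a⟩
  obtain ⟨c1, hc1I, hc1π⟩ := (Ideal.mem_map_iff_of_surjective (redMod F n) hπsurj).mp
    (hI1 ▸ Ideal.mem_span_singleton_self e1)
  obtain ⟨a1, b, hc1⟩ := stmt5_decomp c1
  have ha1 : a1 = e1 := by
    rw [← hc1π, hc1]; exact (stmt5_redMod_decomp a1 b).symm
  rw [ha1] at hc1
  -- the generator
  set β := b + (e0 - e1) * (1 - b) with hβ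
  set t := (emb F n) e1 + (uE F n) * (emb F n) β with ht
  have htI : t ∈ I := by
    have hmem : (e0 - e1) * (1 - b) ∈ I0 :=
      Ideal.mul_mem_right _ _ (I0.sub_mem (hI0 ▸ Ideal.mem_span_singleton_self e0) he1I0)
    have h2 : (uE F n) * (emb F n) ((e0 - e1) * (1 - b)) ∈ I := hmem
    have : t = c1 + (uE F n) * (emb F n) ((e0 - e1) * (1 - b)) := by
      rw [ht, hc1, hβ, map_add, mul_add]; ring
    rw [this]
    exact I.add_mem hc1I h2
  have hue1 : (uE F n) * (emb F n) e1 ∈ Ideal.span {t} := by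
    have : (uE F n) * (emb F n) e1 = (uE F n) * t := by
      rw [ht, mul_add, ← mul_assoc, stmt5_uE_sq, zero_mul, add_zero]
    rw [this]
    exact Ideal.mul_mem_left _ (uE F n) (Ideal.mem_span_singleton_self t)
  have hue01 : (uE F n) * (emb F n) (e0 - e1) ∈ Ideal.span {t} := by
    have hβe : β * (e0 - e1) = e0 - e1 := by
      rw [hβ]; linear_combination (1 - b) * he0 + (1 - b) * he1 - 2 * (1 - b) * he10
    have he1e : e1 * (e0 - e1) = 0 := by
      linear_combination he10 - he1
    have : (uE F n) * (emb F n) (e0 - e1) = t * (emb F n) (e0 - e1) := by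
      rw [ht, add_mul, ← map_mul, he1e, map_zero, zero_add, mul_assoc, ← map_mul, hβe]
    rw [this]
    exact Ideal.mul_mem_right _ _ (Ideal.mem_span_singleton_self t)
  have hue0 : (uE F n) * (emb F n) e0 ∈ Ideal.span {t} := by
    have : (uE F n) * (emb F n) e0 = (uE F n) * (emb F n) e1 + (uE F n) * (emb F n) (e0 - e1) := by
      rw [map_sub]; ring
    rw [this]
    exact Ideal.add_mem _ hue1 hue01
  refine ⟨⟨t, le_antisymm ?_ (Ideal.span_le.mpr (by simpa using htI))⟩⟩
  intro m hm
  obtain ⟨a, b', hm'⟩ := stmt5_decomp m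
  have hπm : (redMod F n) m = a := by rw [hm']; exact stmt5_redMod_decomp a b'
  have haI1 : a ∈ I1 := hπm ▸ Ideal.mem_map_of_mem (redMod F n) hm
  obtain ⟨x, hx⟩ := Ideal.mem_span_singleton'.mp (hI1 ▸ haI1)
  have hae : e1 * a = a := by rw [← hx, ← mul_assoc, mul_comm e1 x, mul_assoc, he1, hx]
  have hrest : m - t * (emb F n) a = (uE F n) * (emb F n) (b' - β * a) := by
    rw [hm', ht, add_mul, ← map_mul, hae, map_sub, map_mul, mul_sub]
    ring
  have hrestI : (uE F n) * (emb F n) (b' - β * a) ∈ I := hrest ▸ I.sub_mem hm (I.mul_mem_right (emb F n a) htI)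
  have hb'' : b' - β * a ∈ I0 := hrestI
  obtain ⟨y, hy⟩ := Ideal.mem_span_singleton'.mp (hI0 ▸ hb'')
  have hfinal : m = t * (emb F n) a + (uE F n * (emb F n) e0) * (emb F n) y := by
    have h5 : (uE F n) * (emb F n) (y * e0) = (uE F n) * (emb F n) (b' - β * a) := by rw [hy]
    rw [ht, hm']
    rw [map_mul] at h5
    calc (emb F n) a + (uE F n) * (emb F n) b'
        = (emb F n e1 + (uE F n) * (emb F n) β) * (emb F n) a + (uE F n) * (emb F n y * (emb F n) e0) := by
          rw [h5, map_sub, map_mul, add_mul, ← map_mul, hae]; ring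
      _ = (emb F n e1 + (uE F n) * (emb F n) β) * (emb F n) a + (uE F n) * (emb F n) e0 * (emb F n) y := by ring
  rw [hfinal]
  exact Ideal.add_mem _ (Ideal.mul_mem_right _ _ (Ideal.mem_span_singleton_self t))
    (Ideal.mul_mem_right _ _ hue0)
end
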